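/- arXiv:1211.1858 — 4 statements merged into one kernel-verified Lean document; each statement's English description precedes it below -/
import Mathlib

section
/- Assume D = 0 and Re(λ_i) < 0 for all i = 1,…,n (the system is asymptotically stable and strictly proper). Then for every ω > 0, ‖H‖²_{H2,ω} = Σ_{i=1}^n Σ_{k=1}^n (2/π)·tr(φ_i·φ_kᵀ/(λ_i+λ_k))·atan(ω/λ_i). -/
open Complex Matrix MeasureTheory intervalIntegral BigOperators

/-- Strictly proper transfer function `H(s) = Σᵢ (s − λᵢ)⁻¹ • φᵢ`. -/
noncomputable def transferH {n n_u n_y : ℕ} (lam : Fin n → ℂ)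
    (φ : Fin n → Matrix (Fin n_y) (Fin n_u) ℂ) (s : ℂ) : Matrix (Fin n_y) (Fin n_u) ℂ :=
  ∑ i, (s - lam i)⁻¹ • φ i

/-- Squared frequency-limited H2-norm:
`‖H‖²_{H2,ω} = (1/(2π)) ∫_{−ω}^{ω} tr(H(iν)·H(−iν)ᵀ) dν`. -/
noncomputable def h2wSq {n n_u n_y : ℕ} (lam : Fin n → ℂ)
    (φ : Fin n → Matrix (Fin n_y) (Fin n_u) ℂ) (ω : ℝ) : ℂ :=
  (2 * (Real.pi : ℂ))⁻¹ * ∫ ν : ℝ in (-ω)..ω,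
    (transferH lam φ (Complex.I * (ν : ℂ)) *
      (transferH lam φ (-(Complex.I * (ν : ℂ))))ᵀ).trace

/-- Principal complex arctangent: `atan z = (1/(2i))·(log(1+iz) − log(1−iz))`,
where `log` is the principal branch of the complex logarithm. -/
noncomputable def catan (z : ℂ) : ℂ :=
  (2 * Complex.I)⁻¹ * (Complex.log (1 + Complex.I * z) - Complex.log (1 - Complex.I * z))

/- ### Auxiliary lemmas -/

lemma log_div_re_pos {u b : ℂ} (hu : 0 < u.re) (hb : 0 < b.re) :
    Complex.log (u / b) = Complex.log u - Complex.log b := by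
  have hu0 : u ≠ 0 := by intro h; simp [h] at hu
  have hb0 : b ≠ 0 := by intro h; simp [h] at hb
  have hau : |arg u| < Real.pi / 2 := abs_arg_lt_pi_div_two_iff.mpr (Or.inl hu)
  have hab : |arg b| < Real.pi / 2 := abs_arg_lt_pi_div_two_iff.mpr (Or.inl hb)
  have hbpi : arg b ≠ Real.pi := by
    intro h; rw [h] at hab; have := abs_lt.mp hab
    nlinarith [Real.pi_pos]
  have hargi : arg b⁻¹ = -arg b := by rw [arg_inv, if_neg hbpi]
  rw [div_eq_mul_inv, Complex.log_mul hu0 (inv_ne_zero hb0), Complex.log_inv b hbpi,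
    sub_eq_add_neg]
  rw [hargi]
  constructor
  · have := abs_lt.mp hau; have := abs_lt.mp hab; linarith
  · have := abs_lt.mp hau; have := abs_lt.mp hab; linarith [Real.pi_pos]

lemma catan_eq {l : ℂ} (hl : l.re < 0) (ω : ℝ) :
    catan ((ω : ℂ) / l) = (Complex.I / 2) *
      (Complex.log (Complex.I * ω - l) - Complex.log (-(Complex.I * ω) - l)) := by
  have hl0 : l ≠ 0 := by intro h; simp [h] at hl
  have h1 : (1 : ℂ) + Complex.I * ((ω : ℂ) / l) = (-(Complex.I * ω) - l) / (-l) := by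
    rw [eq_div_iff (neg_ne_zero.mpr hl0)]; field_simp; ring
  have h2 : (1 : ℂ) - Complex.I * ((ω : ℂ) / l) = (Complex.I * ω - l) / (-l) := by
    rw [eq_div_iff (neg_ne_zero.mpr hl0)]; field_simp; ring
  have r1 : (0:ℝ) < (-(Complex.I * ω) - l).re := by simp; linarith
  have r2 : (0:ℝ) < (Complex.I * ω - l).re := by simp; linarith
  have r3 : (0:ℝ) < (-l).re := by simp; linarith
  rw [catan, h1, h2, log_div_re_pos r1 r3, log_div_re_pos r2 r3]
  have : (2 * Complex.I)⁻¹ = -(Complex.I/2) := by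
    rw [mul_inv, Complex.inv_I]; ring
  rw [this]; ring

lemma re_pos_1 (μ : ℂ) (hμ : μ.re < 0) (ν : ℝ) : 0 < (Complex.I * ν - μ).re := by
  simp; linarith

lemma re_pos_2 (κ : ℂ) (hκ : κ.re < 0) (ν : ℝ) : 0 < (-(Complex.I * ν) - κ).re := by
  simp; linarith

lemma cont_resolvent (μ κ : ℂ) (hμ : μ.re < 0) (hκ : κ.re < 0) :
    Continuous (fun ν : ℝ => (Complex.I * ν - μ)⁻¹ * (-(Complex.I * ν) - κ)⁻¹) := by
  have c1 : Continuous (fun ν : ℝ => Complex.I * ν - μ) := by continuity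
  have c2 : Continuous (fun ν : ℝ => -(Complex.I * ν) - κ) := by continuity
  exact (c1.inv₀ (fun ν => by have := re_pos_1 μ hμ ν; intro h; rw [h] at this; simp at this)).mul
    (c2.inv₀ (fun ν => by have := re_pos_2 κ hκ ν; intro h; rw [h] at this; simp at this))

lemma integral_resolvent (μ κ : ℂ) (hμ : μ.re < 0) (hκ : κ.re < 0) (ω : ℝ) :
    (∫ ν : ℝ in (-ω)..ω, (Complex.I * ν - μ)⁻¹ * (-(Complex.I * ν) - κ)⁻¹)
      = Complex.I * (μ + κ)⁻¹ *
        ((Complex.log (Complex.I * ω - μ) - Complex.log (-(Complex.I * ω) - μ))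
          + (Complex.log (Complex.I * ω - κ) - Complex.log (-(Complex.I * ω) - κ))) := by
  have hsum : μ + κ ≠ 0 := by
    intro h
    have : (μ + κ).re < 0 := by simp [Complex.add_re]; linarith
    rw [h] at this; simp at this
  set G : ℝ → ℂ := fun ν => -(μ + κ)⁻¹ *
    (-Complex.I * Complex.log (Complex.I * ν - μ) + Complex.I * Complex.log (-(Complex.I * ν) - κ))
    with hG
  have hderiv : ∀ ν ∈ Set.uIcc (-ω) ω, HasDerivAt G
      ((Complex.I * ν - μ)⁻¹ * (-(Complex.I * ν) - κ)⁻¹) ν := by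
    intro ν _
    have h1ne : Complex.I * ν - μ ≠ 0 := by
      have := re_pos_1 μ hμ ν; intro h; rw [h] at this; simp at this
    have h2ne : -(Complex.I * ν) - κ ≠ 0 := by
      have := re_pos_2 κ hκ ν; intro h; rw [h] at this; simp at this
    have hin1 : HasDerivAt (fun ν : ℝ => Complex.I * ν - μ) Complex.I ν := by
      simpa using ((Complex.ofRealCLM.hasDerivAt (x := ν)).const_mul Complex.I).sub_const μ
    have hin2 : HasDerivAt (fun ν : ℝ => -(Complex.I * ν) - κ) (-Complex.I) ν := by
      simpa using (((Complex.ofRealCLM.hasDerivAt (x := ν)).const_mul Complex.I).neg).sub_const κ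
    have hlog1 : HasDerivAt (fun ν : ℝ => Complex.log (Complex.I * ν - μ))
        ((Complex.I * ν - μ)⁻¹ * Complex.I) ν :=
      by have := (Complex.hasDerivAt_log (Complex.mem_slitPlane_iff.mpr (Or.inl (re_pos_1 μ hμ ν)))).comp ν hin1; exact this
    have hlog2 : HasDerivAt (fun ν : ℝ => Complex.log (-(Complex.I * ν) - κ))
        ((-(Complex.I * ν) - κ)⁻¹ * -Complex.I) ν :=
      by have := (Complex.hasDerivAt_log (Complex.mem_slitPlane_iff.mpr (Or.inl (re_pos_2 κ hκ ν)))).comp ν hin2; exact this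
    have := (((hlog1.const_mul (-Complex.I)).add (hlog2.const_mul Complex.I)).const_mul
      (-(μ + κ)⁻¹))
    convert this using 1
    · rfl
    · rfl
    field_simp
    ring_nf
    simp
  have hint : IntervalIntegrable
      (fun ν : ℝ => (Complex.I * ν - μ)⁻¹ * (-(Complex.I * ν) - κ)⁻¹) MeasureTheory.volume (-ω) ω :=
    (cont_resolvent μ κ hμ hκ).intervalIntegrable _ _
  rw [intervalIntegral.integral_eq_sub_of_hasDerivAt hderiv hint]
  rw [hG]
  simp only []
  push_cast
  ring

lemma trace_expand {n n_u n_y : ℕ} (lam : Fin n → ℂ)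
    (φ : Fin n → Matrix (Fin n_y) (Fin n_u) ℂ) (ν : ℝ) :
    (transferH lam φ (Complex.I * (ν : ℂ)) *
      (transferH lam φ (-(Complex.I * (ν : ℂ))))ᵀ).trace
    = ∑ i, ∑ k, ((Complex.I * ν - lam i)⁻¹ * (-(Complex.I * ν) - lam k)⁻¹)
        * (φ i * (φ k)ᵀ).trace := by
  simp only [transferH, Matrix.transpose_sum, Matrix.transpose_smul, Matrix.sum_mul,
    Matrix.mul_sum, Matrix.smul_mul, Matrix.mul_smul, Matrix.trace_sum, Matrix.trace_smul,
    smul_smul, smul_eq_mul]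
  rw [Finset.sum_comm]
  simp only [Finset.mul_sum]
  exact Finset.sum_congr rfl fun i _ => Finset.sum_congr rfl fun k _ => by ring

theorem stmt_1 (n n_u n_y : ℕ) (hn : 0 < n) (hnu : 0 < n_u) (hny : 0 < n_y)
    (lam : Fin n → ℂ) (hdist : Function.Injective lam)
    (φ : Fin n → Matrix (Fin n_y) (Fin n_u) ℂ)
    (hstable : ∀ i, (lam i).re < 0) (ω : ℝ) (hω : 0 < ω) :
    h2wSq lam φ ω
      = ∑ i, ∑ k,
          (2 / (Real.pi : ℂ)) * ((lam i + lam k)⁻¹ • (φ i * (φ k)ᵀ)).trace *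
            catan ((ω : ℂ) / lam i) := by
  have hπ : (Real.pi : ℂ) ≠ 0 := by exact_mod_cast Real.pi_ne_zero
  set A : Fin n → ℂ := fun i =>
    Complex.log (Complex.I * ω - lam i) - Complex.log (-(Complex.I * ω) - lam i) with hA
  set c : Fin n → Fin n → ℂ := fun i k => (φ i * (φ k)ᵀ).trace with hc
  have hcsymm : ∀ i k, c k i = c i k := by
    intro i k
    rw [hc]
    simp only []
    rw [← Matrix.trace_transpose (φ k * (φ i)ᵀ), Matrix.transpose_mul,
      Matrix.transpose_transpose]
  -- compute the integral
  have hint : (∫ ν : ℝ in (-ω)..ω,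
      (transferH lam φ (Complex.I * (ν : ℂ)) *
        (transferH lam φ (-(Complex.I * (ν : ℂ))))ᵀ).trace)
      = ∑ i, ∑ k, Complex.I * (lam i + lam k)⁻¹ * (A i + A k) * c i k := by
    simp only [trace_expand lam φ]
    rw [intervalIntegral.integral_finset_sum]
    · refine Finset.sum_congr rfl fun i _ => ?_
      rw [intervalIntegral.integral_finset_sum]
      · refine Finset.sum_congr rfl fun k _ => ?_
        rw [intervalIntegral.integral_mul_const,
          integral_resolvent (lam i) (lam k) (hstable i) (hstable k) ω]
      · intro k _
        exact ((cont_resolvent (lam i) (lam k) (hstable i) (hstable k)).mul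
          continuous_const).intervalIntegrable _ _
    · intro i _
      refine Continuous.intervalIntegrable ?_ _ _
      exact continuous_finset_sum _ fun k _ =>
        (cont_resolvent (lam i) (lam k) (hstable i) (hstable k)).mul continuous_const
  rw [h2wSq, hint, Finset.mul_sum]
  simp only [Finset.mul_sum]
  -- split the sum into the `A i` part and the `A k` part
  have hsplit : ∀ i k, (2 * (Real.pi : ℂ))⁻¹ * (Complex.I * (lam i + lam k)⁻¹ * (A i + A k) * c i k)
      = (2 * (Real.pi : ℂ))⁻¹ * (Complex.I * (lam i + lam k)⁻¹ * A i * c i k)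
        + (2 * (Real.pi : ℂ))⁻¹ * (Complex.I * (lam i + lam k)⁻¹ * A k * c i k) := by
    intro i k; ring
  simp only [hsplit, Finset.sum_add_distrib]
  have hswap : (∑ i, ∑ k, (2 * (Real.pi : ℂ))⁻¹ * (Complex.I * (lam i + lam k)⁻¹ * A k * c i k))
      = ∑ i, ∑ k, (2 * (Real.pi : ℂ))⁻¹ * (Complex.I * (lam i + lam k)⁻¹ * A i * c i k) := by
    rw [Finset.sum_comm]
    refine Finset.sum_congr rfl fun i _ => Finset.sum_congr rfl fun k _ => ?_
    rw [add_comm (lam k) (lam i), hcsymm i k]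
  rw [hswap, ← Finset.sum_add_distrib]
  refine Finset.sum_congr rfl fun i _ => ?_
  rw [← Finset.sum_add_distrib]
  refine Finset.sum_congr rfl fun k _ => ?_
  rw [catan_eq (hstable i) ω]
  simp only [hA, hc, Matrix.trace_smul, smul_eq_mul]
  field_simp
  ring
end

section
/- Assume D = 0 and Re(λ_i) < 0 for all i = 1,…,n (the system is asymptotically stable and strictly proper). Then for every ω > 0, ‖H‖²_{H2,ω} = tr( Σ_{i=1}^n (−(2/π)·atan(ω/λ_i)) · φ_i · H(−λ_i)ᵀ ). (The evaluation H(−λ_i) is well defined because −λ_i has positive real part and hence is not a pole.) -/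
open Complex Matrix MeasureTheory intervalIntegral BigOperators

section helpers

private lemma ne_zero_of_re_pos {z : ℂ} (h : 0 < z.re) : z ≠ 0 := by
  intro h0; rw [h0] at h; simp at h

private lemma logMulPos {u c : ℂ} (hu : 0 < u.re) (hc : 0 < c.re) :
    Complex.log (u * c) = Complex.log u + Complex.log c := by
  refine Complex.log_mul (_root_.ne_zero_of_re_pos hu) (_root_.ne_zero_of_re_pos hc) ?_
  have h1 := Complex.abs_arg_lt_pi_div_two_iff.mpr (Or.inl hu)
  have h2 := Complex.abs_arg_lt_pi_div_two_iff.mpr (Or.inl hc)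
  rw [abs_lt] at h1 h2
  constructor
  · linarith [Real.pi_pos]
  · linarith [Real.pi_pos]

private lemma key_log {a : ℂ} (ha : a.re < 0) (ω : ℝ) :
    Complex.log (1 + Complex.I * ((ω : ℂ)/a)) - Complex.log (1 - Complex.I * ((ω : ℂ)/a))
      = Complex.log (-(Complex.I * (ω:ℂ)) - a) - Complex.log (Complex.I * (ω:ℂ) - a) := by
  have ha0 : a ≠ 0 := fun h => by simp [h] at ha
  have hu : 0 < (Complex.I * (ω:ℂ) - a).re := by
    simp [Complex.sub_re, Complex.mul_re]; linarith
  have hv : 0 < (-(Complex.I * (ω:ℂ)) - a).re := by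
    simp [Complex.sub_re, Complex.mul_re]; linarith
  have hc : 0 < (-a⁻¹).re := by
    rw [Complex.neg_re, Complex.inv_re]
    have : 0 < Complex.normSq a := Complex.normSq_pos.mpr ha0
    have := div_neg_of_neg_of_pos ha this
    linarith
  have e1 : 1 + Complex.I * ((ω : ℂ)/a) = (-(Complex.I * (ω:ℂ)) - a) * (-a⁻¹) := by
    field_simp
    ring
  have e2 : 1 - Complex.I * ((ω : ℂ)/a) = (Complex.I * (ω:ℂ) - a) * (-a⁻¹) := by
    field_simp
    ring
  rw [e1, e2, logMulPos hv hc, logMulPos hu hc]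
  ring

private lemma int_left {a : ℂ} (ha : a.re < 0) (ω : ℝ) :
    (∫ ν : ℝ in (-ω)..ω, (Complex.I * (ν:ℂ) - a)⁻¹) = -2 * catan ((ω:ℂ) / a) := by
  have hre : ∀ ν : ℝ, 0 < (Complex.I * (ν:ℂ) - a).re := by
    intro ν; simp [Complex.sub_re, Complex.mul_re]; linarith
  have hne : ∀ ν : ℝ, Complex.I * (ν:ℂ) - a ≠ 0 := fun ν => _root_.ne_zero_of_re_pos (hre ν)
  have hcont : Continuous fun ν : ℝ => (Complex.I * (ν:ℂ) - a)⁻¹ := by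
    refine Continuous.inv₀ ?_ hne
    exact (continuous_const.mul Complex.continuous_ofReal).sub continuous_const
  have hder : ∀ ν ∈ Set.uIcc (-ω) ω,
      HasDerivAt (fun t : ℝ => -Complex.I * Complex.log (Complex.I * (t:ℂ) - a))
        ((Complex.I * (ν:ℂ) - a)⁻¹) ν := by
    intro ν _
    have h1 : HasDerivAt (fun t : ℝ => Complex.I * (t:ℂ) - a) Complex.I ν := by
      simpa using ((Complex.ofRealCLM.hasDerivAt (x := ν)).const_mul Complex.I).sub_const a
    have h2 := (Complex.hasDerivAt_log (Complex.mem_slitPlane_iff.mpr (Or.inl (hre ν)))).comp ν h1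
    have h3 := h2.const_mul (-Complex.I)
    convert h3 using 1
    · rfl
    · rfl
    have := hne ν
    field_simp
    simp
  rw [intervalIntegral.integral_eq_sub_of_hasDerivAt hder (hcont.intervalIntegrable _ _)]
  have := key_log ha ω
  simp only [catan]
  push_cast
  rw [show Complex.log (1 + Complex.I * ((ω:ℂ)/a)) - Complex.log (1 - Complex.I * ((ω:ℂ)/a))
      = Complex.log (-(Complex.I * (ω:ℂ)) - a) - Complex.log (Complex.I * (ω:ℂ) - a) from
      key_log ha ω]
  rw [show Complex.I * (-(ω:ℂ)) = -(Complex.I * (ω:ℂ)) by ring,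
      show (2*Complex.I)⁻¹ = -Complex.I/2 by rw [mul_inv, Complex.inv_I]; ring]
  ring

private lemma int_right {b : ℂ} (hb : b.re < 0) (ω : ℝ) :
    (∫ ν : ℝ in (-ω)..ω, (Complex.I * (ν:ℂ) + b)⁻¹) = 2 * catan ((ω:ℂ) / b) := by
  have hre : ∀ ν : ℝ, 0 < (-(Complex.I * (ν:ℂ)) - b).re := by
    intro ν; simp [Complex.sub_re, Complex.mul_re]; linarith
  have hne : ∀ ν : ℝ, Complex.I * (ν:ℂ) + b ≠ 0 := by
    intro ν h
    have := hre ν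
    rw [show -(Complex.I * (ν:ℂ)) - b = -(Complex.I * (ν:ℂ) + b) by ring, h] at this
    simp at this
  have hcont : Continuous fun ν : ℝ => (Complex.I * (ν:ℂ) + b)⁻¹ := by
    refine Continuous.inv₀ ?_ hne
    exact (continuous_const.mul Complex.continuous_ofReal).add continuous_const
  have hder : ∀ ν ∈ Set.uIcc (-ω) ω,
      HasDerivAt (fun t : ℝ => -Complex.I * Complex.log (-(Complex.I * (t:ℂ)) - b))
        ((Complex.I * (ν:ℂ) + b)⁻¹) ν := by
    intro ν _
    have h1 : HasDerivAt (fun t : ℝ => -(Complex.I * (t:ℂ)) - b) (-Complex.I) ν := by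
      simpa using (((Complex.ofRealCLM.hasDerivAt (x := ν)).const_mul Complex.I).neg).sub_const b
    have h2 := (Complex.hasDerivAt_log (Complex.mem_slitPlane_iff.mpr (Or.inl (hre ν)))).comp ν h1
    have h3 := h2.const_mul (-Complex.I)
    convert h3 using 1
    · rfl
    · rfl
    have h4 := hne ν
    have h5 : -(Complex.I * (ν:ℂ)) - b = -(Complex.I * (ν:ℂ) + b) := by ring
    rw [h5, inv_neg]
    field_simp
    simp
  rw [intervalIntegral.integral_eq_sub_of_hasDerivAt hder (hcont.intervalIntegrable _ _)]
  simp only [catan]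
  push_cast
  rw [show Complex.log (1 + Complex.I * ((ω:ℂ)/b)) - Complex.log (1 - Complex.I * ((ω:ℂ)/b))
      = Complex.log (-(Complex.I * (ω:ℂ)) - b) - Complex.log (Complex.I * (ω:ℂ) - b) from
      key_log hb ω]
  rw [show -(Complex.I * (-(ω:ℂ))) - b = Complex.I * (ω:ℂ) - b by ring,
      show (2*Complex.I)⁻¹ = -Complex.I/2 by rw [mul_inv, Complex.inv_I]; ring]
  ring

private lemma int_pair {a b : ℂ} (ha : a.re < 0) (hb : b.re < 0) (ω : ℝ) :
    (∫ ν : ℝ in (-ω)..ω, (Complex.I * (ν:ℂ) - a)⁻¹ * (-(Complex.I * (ν:ℂ)) - b)⁻¹)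
      = 2 * (a + b)⁻¹ * (catan ((ω:ℂ)/a) + catan ((ω:ℂ)/b)) := by
  have hab : a + b ≠ 0 := by
    intro h
    have : (a + b).re < 0 := by rw [Complex.add_re]; linarith
    rw [h] at this; simp at this
  have hneA : ∀ ν : ℝ, Complex.I * (ν:ℂ) - a ≠ 0 := by
    intro ν
    apply _root_.ne_zero_of_re_pos
    simp [Complex.sub_re, Complex.mul_re]; linarith
  have hneB : ∀ ν : ℝ, Complex.I * (ν:ℂ) + b ≠ 0 := by
    intro ν h
    have : (Complex.I * (ν:ℂ) + b).re = b.re := by simp [Complex.add_re, Complex.mul_re]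
    rw [h] at this; simp at this; linarith
  have hcontA : Continuous fun ν : ℝ => (Complex.I * (ν:ℂ) - a)⁻¹ :=
    Continuous.inv₀ ((continuous_const.mul Complex.continuous_ofReal).sub continuous_const) hneA
  have hcontB : Continuous fun ν : ℝ => (Complex.I * (ν:ℂ) + b)⁻¹ :=
    Continuous.inv₀ ((continuous_const.mul Complex.continuous_ofReal).add continuous_const) hneB
  have hptwise : ∀ ν : ℝ, (Complex.I * (ν:ℂ) - a)⁻¹ * (-(Complex.I * (ν:ℂ)) - b)⁻¹
      = -(a+b)⁻¹ * (Complex.I * (ν:ℂ) - a)⁻¹ + (a+b)⁻¹ * (Complex.I * (ν:ℂ) + b)⁻¹ := by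
    intro ν
    rw [show -(Complex.I * (ν:ℂ)) - b = -(Complex.I * (ν:ℂ) + b) by ring, inv_neg]
    field_simp [hab, hneA ν, hneB ν]
    ring
  simp_rw [hptwise]
  rw [intervalIntegral.integral_add (f := fun ν : ℝ => -(a+b)⁻¹ * (Complex.I * (ν:ℂ) - a)⁻¹)
      (g := fun ν : ℝ => (a+b)⁻¹ * (Complex.I * (ν:ℂ) + b)⁻¹) ((continuous_const.mul hcontA).intervalIntegrable _ _)
    ((continuous_const.mul hcontB).intervalIntegrable _ _),
    intervalIntegral.integral_const_mul, intervalIntegral.integral_const_mul,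
    int_left ha, int_right hb]
  ring

end helpers

theorem stmt_2 (n n_u n_y : ℕ) (hn : 0 < n) (hnu : 0 < n_u) (hny : 0 < n_y)
    (lam : Fin n → ℂ) (hdist : Function.Injective lam)
    (φ : Fin n → Matrix (Fin n_y) (Fin n_u) ℂ)
    (hstable : ∀ i, (lam i).re < 0) (ω : ℝ) (hω : 0 < ω) :
    h2wSq lam φ ω
      = (∑ i, (-(2 / (Real.pi : ℂ)) * catan ((ω : ℂ) / lam i)) •
          (φ i * (transferH lam φ (-lam i))ᵀ)).trace := by
  classical
  have hπ : (Real.pi : ℂ) ≠ 0 := by exact_mod_cast Real.pi_ne_zero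
  set A : Fin n → ℂ := fun i => catan ((ω:ℂ) / lam i) with hA
  set T : Fin n → Fin n → ℂ := fun i j => (φ i * (φ j)ᵀ).trace with hT
  have hab : ∀ i j : Fin n, lam i + lam j ≠ 0 := by
    intro i j h
    have : (lam i + lam j).re < 0 := by
      rw [Complex.add_re]; linarith [hstable i, hstable j]
    rw [h] at this; simp at this
  have Tsym : ∀ i j, T i j = T j i := by
    intro i j
    rw [hT]
    dsimp only
    rw [← Matrix.trace_transpose, Matrix.transpose_mul, Matrix.transpose_transpose]
  -- pointwise expansion of the integrand
  have hexp : ∀ ν : ℝ,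
      (transferH lam φ (Complex.I * (ν:ℂ)) * (transferH lam φ (-(Complex.I * (ν:ℂ))))ᵀ).trace
      = ∑ i, ∑ j, ((Complex.I * (ν:ℂ) - lam i)⁻¹ * (-(Complex.I * (ν:ℂ)) - lam j)⁻¹) * T i j := by
    intro ν
    simp only [transferH, Matrix.transpose_sum, Matrix.transpose_smul, Matrix.sum_mul,
      Matrix.mul_sum, Matrix.smul_mul, Matrix.mul_smul, Matrix.trace_sum, Matrix.trace_smul,
      smul_smul, smul_eq_mul, hT]
    simp_rw [Finset.mul_sum]
    rw [Finset.sum_comm]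
    exact Finset.sum_congr rfl fun i _ => Finset.sum_congr rfl fun j _ => by ring
  -- continuity / integrability
  have hcont : ∀ i j : Fin n, Continuous fun ν : ℝ =>
      ((Complex.I * (ν:ℂ) - lam i)⁻¹ * (-(Complex.I * (ν:ℂ)) - lam j)⁻¹) * T i j := by
    intro i j
    have h1 : Continuous fun ν : ℝ => (Complex.I * (ν:ℂ) - lam i)⁻¹ := by
      refine Continuous.inv₀ ((continuous_const.mul Complex.continuous_ofReal).sub
        continuous_const) (fun ν => ?_)
      intro h
      have : (Complex.I * (ν:ℂ) - lam i).re = -(lam i).re := by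
        simp [Complex.sub_re, Complex.mul_re]
      rw [h] at this; simp at this; linarith [hstable i]
    have h2 : Continuous fun ν : ℝ => (-(Complex.I * (ν:ℂ)) - lam j)⁻¹ := by
      refine Continuous.inv₀ (((continuous_const.mul Complex.continuous_ofReal).neg).sub
        continuous_const) (fun ν => ?_)
      intro h
      have : (-(Complex.I * (ν:ℂ)) - lam j).re = -(lam j).re := by
        simp [Complex.sub_re, Complex.mul_re]
      rw [h] at this; simp at this; linarith [hstable j]
    exact (h1.mul h2).mul continuous_const
  -- the integral
  have hint : (∫ ν : ℝ in (-ω)..ω,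
      (transferH lam φ (Complex.I * (ν:ℂ)) * (transferH lam φ (-(Complex.I * (ν:ℂ))))ᵀ).trace)
      = ∑ i, ∑ j, (2 * (lam i + lam j)⁻¹ * (A i + A j)) * T i j := by
    rw [intervalIntegral.integral_congr (g := fun ν : ℝ => ∑ i, ∑ j,
      ((Complex.I * (ν:ℂ) - lam i)⁻¹ * (-(Complex.I * (ν:ℂ)) - lam j)⁻¹) * T i j)
      (fun ν _ => hexp ν)]
    have houter : ∀ i : Fin n, IntervalIntegrable (fun ν : ℝ => ∑ j,
        ((Complex.I * (ν:ℂ) - lam i)⁻¹ * (-(Complex.I * (ν:ℂ)) - lam j)⁻¹) * T i j)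
        MeasureTheory.volume (-ω) ω := by
      intro i
      have := IntervalIntegrable.sum (μ := MeasureTheory.volume) (a := -ω) (b := ω)
        Finset.univ (f := fun j : Fin n => fun ν : ℝ =>
          ((Complex.I * (ν:ℂ) - lam i)⁻¹ * (-(Complex.I * (ν:ℂ)) - lam j)⁻¹) * T i j)
        (fun j _ => (hcont i j).intervalIntegrable _ _)
      simpa [Finset.sum_fn] using this
    rw [intervalIntegral.integral_finset_sum (fun i _ => houter i)]
    refine Finset.sum_congr rfl fun i _ => ?_
    rw [intervalIntegral.integral_finset_sum (fun j _ => (hcont i j).intervalIntegrable _ _)]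
    refine Finset.sum_congr rfl fun j _ => ?_
    rw [intervalIntegral.integral_mul_const, int_pair (hstable i) (hstable j)]
  -- the RHS
  have hRHS : (∑ i, (-(2 / (Real.pi : ℂ)) * A i) •
        (φ i * (transferH lam φ (-lam i))ᵀ)).trace
      = ∑ i, ∑ j, ((-(2 / (Real.pi : ℂ)) * A i) * (-(lam i) - lam j)⁻¹) * T i j := by
    simp only [transferH, Matrix.transpose_sum, Matrix.transpose_smul, Matrix.mul_sum,
      Matrix.mul_smul, Finset.smul_sum, Matrix.trace_sum, Matrix.trace_smul,
      smul_smul, smul_eq_mul, hT]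
  -- final algebra
  have hswap : ∑ i, ∑ j, (lam i + lam j)⁻¹ * A j * T i j
      = ∑ i, ∑ j, (lam i + lam j)⁻¹ * A i * T i j := by
    rw [Finset.sum_comm]
    refine Finset.sum_congr rfl fun i _ => Finset.sum_congr rfl fun j _ => ?_
    rw [add_comm (lam j), Tsym j i]
  have hsplit : ∑ i, ∑ j, (2 * (lam i + lam j)⁻¹ * (A i + A j)) * T i j
      = 2 * (∑ i, ∑ j, (lam i + lam j)⁻¹ * A i * T i j)
        + 2 * (∑ i, ∑ j, (lam i + lam j)⁻¹ * A j * T i j) := by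
    rw [Finset.mul_sum, Finset.mul_sum, ← Finset.sum_add_distrib]
    refine Finset.sum_congr rfl fun i _ => ?_
    rw [Finset.mul_sum, Finset.mul_sum, ← Finset.sum_add_distrib]
    exact Finset.sum_congr rfl fun j _ => by ring
  rw [show h2wSq lam φ ω = (2 * (Real.pi : ℂ))⁻¹ * ∫ ν : ℝ in (-ω)..ω,
      (transferH lam φ (Complex.I * (ν:ℂ)) * (transferH lam φ (-(Complex.I * (ν:ℂ))))ᵀ).trace
      from rfl]
  rw [hint, hRHS, hsplit, hswap]
  have hneg : ∀ i j : Fin n, (-(lam i) - lam j)⁻¹ = -((lam i + lam j)⁻¹) := by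
    intro i j
    rw [show -(lam i) - lam j = -(lam i + lam j) by ring, inv_neg]
  have : ∑ i, ∑ j, ((-(2 / (Real.pi : ℂ)) * A i) * (-(lam i) - lam j)⁻¹) * T i j
      = (2 / (Real.pi : ℂ)) * ∑ i, ∑ j, (lam i + lam j)⁻¹ * A i * T i j := by
    rw [Finset.mul_sum]
    refine Finset.sum_congr rfl fun i _ => ?_
    rw [Finset.mul_sum]
    refine Finset.sum_congr rfl fun j _ => ?_
    rw [hneg i j]; ring
  rw [this]
  field_simp
  ring
end

section
/- Assume D = 0 and Re(λ_i) < 0 for all i = 1,…,n (the system is asymptotically stable and strictly proper). Then ‖H‖²_{H2,ω} tends, as the real number ω tends to +∞, to tr( Σ_{i=1}^n φ_i · H(−λ_i)ᵀ ), i.e. the squared frequency-limited H2-norm converges to the squared H2-norm of the system. -/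
open Complex Matrix MeasureTheory intervalIntegral BigOperators

open Filter Topology

namespace StmtAux

lemma re1 (lam : ℂ) (ν : ℝ) : (Complex.I * ν - lam).re = -lam.re := by
  simp [Complex.sub_re, Complex.mul_re]

lemma re2 (lam : ℂ) (ν : ℝ) : (-(Complex.I * ν) - lam).re = -lam.re := by
  simp [Complex.sub_re, Complex.neg_re, Complex.mul_re]

lemma ne1 {lam : ℂ} (h : lam.re < 0) (ν : ℝ) : Complex.I * ν - lam ≠ 0 := by
  intro hz
  have h2 := re1 lam ν
  rw [hz] at h2; simp at h2; linarith

lemma ne2 {lam : ℂ} (h : lam.re < 0) (ν : ℝ) : -(Complex.I * ν) - lam ≠ 0 := by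
  intro hz
  have h2 := re2 lam ν
  rw [hz] at h2; simp at h2; linarith

lemma mem1 {lam : ℂ} (h : lam.re < 0) (ν : ℝ) : Complex.I * ν - lam ∈ Complex.slitPlane :=
  Complex.mem_slitPlane_iff.mpr (Or.inl (by rw [re1]; linarith))

lemma mem2 {lam : ℂ} (h : lam.re < 0) (ν : ℝ) : -(Complex.I * ν) - lam ∈ Complex.slitPlane :=
  Complex.mem_slitPlane_iff.mpr (Or.inl (by rw [re2]; linarith))

lemma sum_ne {lam mu : ℂ} (hl : lam.re < 0) (hm : mu.re < 0) : lam + mu ≠ 0 := by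
  intro h
  have := congrArg Complex.re h
  simp [Complex.add_re] at this
  linarith

/-- Antiderivative of `(Iν-λ)⁻¹ (-Iν-μ)⁻¹`. -/
noncomputable def F (lam mu : ℂ) (ν : ℝ) : ℂ :=
  -(lam + mu)⁻¹ * (-Complex.I * Complex.log (Complex.I * ν - lam)
    + Complex.I * Complex.log (-(Complex.I * ν) - mu))

lemma hasDeriv1 {lam : ℂ} (h : lam.re < 0) (ν : ℝ) :
    HasDerivAt (fun ν : ℝ => Complex.log (Complex.I * ν - lam))
      ((Complex.I * ν - lam)⁻¹ * Complex.I) ν := by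
  have hc : HasDerivAt (fun ν : ℝ => Complex.I * (ν : ℂ) - lam) Complex.I ν := by
    simpa using ((Complex.ofRealCLM.hasDerivAt (x := ν)).const_mul Complex.I).sub_const lam
  exact (Complex.hasDerivAt_log (mem1 h ν)).comp ν hc

lemma hasDeriv2 {mu : ℂ} (h : mu.re < 0) (ν : ℝ) :
    HasDerivAt (fun ν : ℝ => Complex.log (-(Complex.I * ν) - mu))
      ((-(Complex.I * ν) - mu)⁻¹ * (-Complex.I)) ν := by
  have hc : HasDerivAt (fun ν : ℝ => -(Complex.I * (ν : ℂ)) - mu) (-Complex.I) ν := by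
    simpa using (((Complex.ofRealCLM.hasDerivAt (x := ν)).const_mul Complex.I).neg).sub_const mu
  exact (Complex.hasDerivAt_log (mem2 h ν)).comp ν hc

lemma hasDerivF {lam mu : ℂ} (hl : lam.re < 0) (hm : mu.re < 0) (ν : ℝ) :
    HasDerivAt (F lam mu) ((Complex.I * ν - lam)⁻¹ * (-(Complex.I * ν) - mu)⁻¹) ν := by
  have h := (((hasDeriv1 hl ν).const_mul (-Complex.I)).add
    ((hasDeriv2 hm ν).const_mul Complex.I)).const_mul (-(lam + mu)⁻¹)
  convert h using 1
  have h1 := ne1 hl ν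
  have h2 := ne2 hm ν
  have h3 := sum_ne hl hm
  · rfl
  · rfl
  · have h1 := ne1 hl ν
    have h2 := ne2 hm ν
    have h3 := sum_ne hl hm
    field_simp
    ring_nf
    rw [Complex.I_sq]
    ring

lemma slitI : Complex.I ∈ Complex.slitPlane :=
  Complex.mem_slitPlane_iff.mpr (Or.inr (by simp))

lemma slitNegI : -Complex.I ∈ Complex.slitPlane :=
  Complex.mem_slitPlane_iff.mpr (Or.inr (by simp))

lemma inv_tendsto : Tendsto (fun ω : ℝ => ((ω : ℂ))⁻¹) atTop (𝓝 0) := by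
  have h := (Complex.continuous_ofReal.tendsto 0).comp tendsto_inv_atTop_zero
  have he : (Complex.ofReal ∘ fun r : ℝ => r⁻¹) = fun ω : ℝ => ((ω : ℂ))⁻¹ := by
    funext ω; simp [Function.comp, Complex.ofReal_inv]
  simpa [he] using h

lemma Dlim {lam : ℂ} (hl : lam.re < 0) :
    Tendsto (fun ω : ℝ => Complex.log (Complex.I * ω - lam)
        - Complex.log (-(Complex.I * ω) - lam)) atTop (𝓝 (Real.pi * Complex.I)) := by
  have hU : Tendsto (fun ω : ℝ => Complex.I - lam * (ω : ℂ)⁻¹) atTop (𝓝 Complex.I) := by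
    simpa using tendsto_const_nhds.sub (inv_tendsto.const_mul lam)
  have hV : Tendsto (fun ω : ℝ => -Complex.I - lam * (ω : ℂ)⁻¹) atTop (𝓝 (-Complex.I)) := by
    simpa using tendsto_const_nhds.sub (inv_tendsto.const_mul lam)
  have hlogU := (continuousAt_clog slitI).tendsto.comp hU
  have hlogV := (continuousAt_clog slitNegI).tendsto.comp hV
  have hmain := hlogU.sub hlogV
  rw [Complex.log_I, Complex.log_neg_I] at hmain
  rw [show ((Real.pi : ℂ)/2*Complex.I - (-((Real.pi : ℂ)/2))*Complex.I : ℂ)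
      = Real.pi * Complex.I by ring] at hmain
  apply hmain.congr'
  filter_upwards [eventually_gt_atTop (0 : ℝ)] with ω hω
  have hω' : (ω : ℂ) ≠ 0 := by exact_mod_cast ne_of_gt hω
  have e1 : Complex.I * ω - lam = (ω : ℂ) * (Complex.I - lam * (ω : ℂ)⁻¹) := by
    field_simp
  have e2 : -(Complex.I * ω) - lam = (ω : ℂ) * (-Complex.I - lam * (ω : ℂ)⁻¹) := by
    field_simp
  have nU : Complex.I - lam * (ω : ℂ)⁻¹ ≠ 0 := by
    intro h; rw [h, mul_zero] at e1; exact ne1 hl ω e1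
  have nV : -Complex.I - lam * (ω : ℂ)⁻¹ ≠ 0 := by
    intro h; rw [h, mul_zero] at e2; exact ne2 hl ω e2
  simp only [Function.comp]
  rw [e1, e2, Complex.log_ofReal_mul hω nU, Complex.log_ofReal_mul hω nV]
  ring

lemma contg {lam mu : ℂ} (hl : lam.re < 0) (hm : mu.re < 0) :
    Continuous (fun ν : ℝ => (Complex.I * ν - lam)⁻¹ * (-(Complex.I * ν) - mu)⁻¹) := by
  have c1 : Continuous (fun ν : ℝ => Complex.I * (ν : ℂ) - lam) := by
    continuity
  have c2 : Continuous (fun ν : ℝ => -(Complex.I * (ν : ℂ)) - mu) := by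
    continuity
  exact (c1.inv₀ (ne1 hl)).mul (c2.inv₀ (ne2 hm))

lemma integral_eq {lam mu : ℂ} (hl : lam.re < 0) (hm : mu.re < 0) (ω : ℝ) :
    (∫ ν : ℝ in (-ω)..ω, (Complex.I * ν - lam)⁻¹ * (-(Complex.I * ν) - mu)⁻¹)
      = F lam mu ω - F lam mu (-ω) :=
  intervalIntegral.integral_eq_sub_of_hasDerivAt (fun ν _ => hasDerivF hl hm ν)
    ((contg hl hm).intervalIntegrable _ _)

lemma int_lim {lam mu : ℂ} (hl : lam.re < 0) (hm : mu.re < 0) :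
    Tendsto (fun ω : ℝ =>
        ∫ ν : ℝ in (-ω)..ω, (Complex.I * ν - lam)⁻¹ * (-(Complex.I * ν) - mu)⁻¹)
      atTop (𝓝 (-(lam + mu)⁻¹ * (2 * Real.pi))) := by
  have hfun : ∀ ω : ℝ, F lam mu ω - F lam mu (-ω)
      = -(lam + mu)⁻¹ * (-Complex.I *
          (Complex.log (Complex.I * ω - lam) - Complex.log (-(Complex.I * ω) - lam))
        - Complex.I *
          (Complex.log (Complex.I * ω - mu) - Complex.log (-(Complex.I * ω) - mu))) := by
    intro ω
    simp only [F]
    push_cast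
    ring_nf
  have hT : Tendsto (fun ω : ℝ => -(lam + mu)⁻¹ * (-Complex.I *
        (Complex.log (Complex.I * ω - lam) - Complex.log (-(Complex.I * ω) - lam))
      - Complex.I *
        (Complex.log (Complex.I * ω - mu) - Complex.log (-(Complex.I * ω) - mu))))
      atTop (𝓝 (-(lam + mu)⁻¹ * (-Complex.I * (Real.pi * Complex.I)
        - Complex.I * (Real.pi * Complex.I)))) :=
    tendsto_const_nhds.mul (((Dlim hl).const_mul (-Complex.I)).sub
      ((Dlim hm).const_mul Complex.I))
  have hval : -Complex.I * ((Real.pi : ℂ) * Complex.I)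
      - Complex.I * ((Real.pi : ℂ) * Complex.I) = 2 * Real.pi := by
    have := Complex.I_mul_I
    linear_combination (-2 * (Real.pi : ℂ)) * this
  rw [hval] at hT
  apply hT.congr
  intro ω
  rw [integral_eq hl hm, hfun]

end StmtAux

open Filter Topology in
theorem stmt_3 (n n_u n_y : ℕ) (hn : 0 < n) (hnu : 0 < n_u) (hny : 0 < n_y)
    (lam : Fin n → ℂ) (hdist : Function.Injective lam)
    (φ : Fin n → Matrix (Fin n_y) (Fin n_u) ℂ)
    (hstable : ∀ i, (lam i).re < 0) :
    Tendsto (fun ω : ℝ => h2wSq lam φ ω) atTop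
      (nhds ((∑ i, φ i * (transferH lam φ (-lam i))ᵀ).trace)) := by
  classical
  set c : Fin n → Fin n → ℂ := fun i j => (φ i * (φ j)ᵀ).trace with hc
  -- integrand identity
  have integrand : ∀ ν : ℝ,
      (transferH lam φ (Complex.I * (ν : ℂ)) *
        (transferH lam φ (-(Complex.I * (ν : ℂ))))ᵀ).trace
      = ∑ i, ∑ j, ((Complex.I * ν - lam i)⁻¹ * (-(Complex.I * ν) - lam j)⁻¹) * c i j := by
    intro ν
    simp only [transferH, Matrix.transpose_sum, Matrix.transpose_smul,
      Matrix.sum_mul, Matrix.mul_sum, Matrix.smul_mul, Matrix.mul_smul,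
      Matrix.trace_sum, Matrix.trace_smul, smul_smul, smul_eq_mul, hc]
    simp only [Finset.mul_sum]
    rw [Finset.sum_comm]
    refine Finset.sum_congr rfl fun i _ => Finset.sum_congr rfl fun j _ => by ring
  -- rewrite h2wSq
  have step : ∀ ω : ℝ, h2wSq lam φ ω = (2 * (Real.pi : ℂ))⁻¹ *
      ∑ i, ∑ j, (∫ ν : ℝ in (-ω)..ω,
        (Complex.I * ν - lam i)⁻¹ * (-(Complex.I * ν) - lam j)⁻¹) * c i j := by
    intro ω
    rw [h2wSq]
    congr 1
    rw [intervalIntegral.integral_congr (g := fun ν : ℝ =>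
      ∑ i, ∑ j, ((Complex.I * ν - lam i)⁻¹ * (-(Complex.I * ν) - lam j)⁻¹) * c i j)
      (fun ν _ => integrand ν)]
    rw [intervalIntegral.integral_finset_sum]
    · refine Finset.sum_congr rfl fun i _ => ?_
      rw [intervalIntegral.integral_finset_sum]
      · exact Finset.sum_congr rfl fun j _ => by
          rw [intervalIntegral.integral_mul_const]
      · intro j _
        exact ((StmtAux.contg (hstable i) (hstable j)).mul continuous_const).intervalIntegrable _ _
    · intro i _
      exact (continuous_finset_sum _ fun j _ =>
        (StmtAux.contg (hstable i) (hstable j)).mul continuous_const).intervalIntegrable _ _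
  -- the limit
  have hT : Tendsto (fun ω : ℝ => (2 * (Real.pi : ℂ))⁻¹ *
      ∑ i, ∑ j, (∫ ν : ℝ in (-ω)..ω,
        (Complex.I * ν - lam i)⁻¹ * (-(Complex.I * ν) - lam j)⁻¹) * c i j)
      atTop (𝓝 ((2 * (Real.pi : ℂ))⁻¹ *
        ∑ i, ∑ j, (-(lam i + lam j)⁻¹ * (2 * Real.pi)) * c i j)) := by
    refine tendsto_const_nhds.mul ?_
    refine tendsto_finset_sum _ fun i _ => tendsto_finset_sum _ fun j _ => ?_
    exact (StmtAux.int_lim (hstable i) (hstable j)).mul_const _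
  have hπ : (2 * (Real.pi : ℂ)) ≠ 0 := by
    simp [Real.pi_ne_zero, Complex.ofReal_ne_zero]
  have hval : (2 * (Real.pi : ℂ))⁻¹ *
      ∑ i, ∑ j, (-(lam i + lam j)⁻¹ * (2 * Real.pi)) * c i j
      = (∑ i, φ i * (transferH lam φ (-lam i))ᵀ).trace := by
    rw [Finset.mul_sum]
    simp only [transferH, Matrix.transpose_sum, Matrix.transpose_smul, Matrix.mul_sum,
      Matrix.mul_smul, Matrix.trace_sum, Matrix.trace_smul, smul_eq_mul]
    refine Finset.sum_congr rfl fun i _ => ?_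
    rw [Finset.mul_sum]
    refine Finset.sum_congr rfl fun j _ => ?_
    show (2 * (Real.pi : ℂ))⁻¹ * (-(lam i + lam j)⁻¹ * (2 * Real.pi) * c i j)
      = (-lam i - lam j)⁻¹ * c i j
    rw [show -lam i - lam j = -(lam i + lam j) by ring, inv_neg]
    field_simp
  rw [hval] at hT
  exact hT.congr fun ω => (step ω).symm
end

section
/- Let z be a complex number with z ≠ i, z ≠ −i and z ≠ 0. If Re(z) = 0 and 0 < Im(z) < 1, then (1/(2i))·log( (z+i)/(z−i) ) = π + (1/(2i))·( log(1 + i/z) − log(1 − i/z) ); otherwise (1/(2i))·log( (z+i)/(z−i) ) = (1/(2i))·( log(1 + i/z) − log(1 − i/z) ). In particular the two formulations of the principal complex arccotangent, acot₂(z) := (1/(2i))·log((z+i)/(z−i)) and acot₁(z) := atan₁(1/z), agree everywhere except on the segment {z : Re(z) = 0, 0 < Im(z) < 1}. -/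
open Complex

lemma hlp1 {a b : ℂ} (ha : a ≠ 0) (hb : b ≠ 0)
    (h1 : -Real.pi < a.arg - b.arg) (h2 : a.arg - b.arg ≤ Real.pi) :
    Complex.log (a / b) = Complex.log a - Complex.log b := by
  have hab : a / b = Complex.exp (Complex.log a - Complex.log b) := by
    rw [Complex.exp_sub, Complex.exp_log ha, Complex.exp_log hb]
  have him : (Complex.log a - Complex.log b).im = a.arg - b.arg := by
    simp [Complex.sub_im, Complex.log_im]
  rw [hab, Complex.log_exp (by rw [him]; exact h1) (by rw [him]; exact h2)]

lemma hlp2 {a b : ℂ} (ha : a ≠ 0) (hb : b ≠ 0) (h : a.arg - b.arg = -Real.pi) :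
    Complex.log (a / b) = 2*Real.pi*Complex.I + (Complex.log a - Complex.log b) := by
  have hab : a / b = Complex.exp (2*Real.pi*Complex.I + (Complex.log a - Complex.log b)) := by
    rw [Complex.exp_add, Complex.exp_two_pi_mul_I, one_mul, Complex.exp_sub,
      Complex.exp_log ha, Complex.exp_log hb]
  have him : (2*Real.pi*Complex.I + (Complex.log a - Complex.log b)).im = Real.pi := by
    simp [Complex.add_im, Complex.sub_im, Complex.log_im, h]
    ring
  rw [hab, Complex.log_exp (by rw [him]; linarith [Real.pi_pos]) (by rw [him])]

lemma hlp3 {a b : ℂ} (ha : a ≠ 0) (hb : b ≠ 0) :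
    ∃ k : ℤ, a.arg - b.arg - (a/b).arg = 2*Real.pi*k := by
  have h := Complex.arg_div_coe_angle ha hb
  have h2 : ((a.arg - b.arg : ℝ) : Real.Angle) = ((a/b).arg : ℝ) := by
    rw [Real.Angle.coe_sub, h]
  exact Real.Angle.angle_eq_iff_two_pi_dvd_sub.1 h2

theorem stmt_12 (z : ℂ) (hz0 : z ≠ 0) (hzi : z ≠ Complex.I) (hzmi : z ≠ -Complex.I) :
    ((z.re = 0 ∧ 0 < z.im ∧ z.im < 1) →
      (2 * Complex.I)⁻¹ * Complex.log ((z + Complex.I) / (z - Complex.I))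
        = (Real.pi : ℂ) + (2 * Complex.I)⁻¹ *
            (Complex.log (1 + Complex.I / z) - Complex.log (1 - Complex.I / z)))
    ∧ (¬ (z.re = 0 ∧ 0 < z.im ∧ z.im < 1) →
      (2 * Complex.I)⁻¹ * Complex.log ((z + Complex.I) / (z - Complex.I))
        = (2 * Complex.I)⁻¹ *
            (Complex.log (1 + Complex.I / z) - Complex.log (1 - Complex.I / z))) := by
  have hzI : z - Complex.I ≠ 0 := sub_ne_zero.mpr hzi
  have hzmI : z + Complex.I ≠ 0 := by
    intro h
    exact hzmi (by linear_combination h)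
  set a := 1 + Complex.I / z with ha_def
  set b := 1 - Complex.I / z with hb_def
  have haz : z * a = z + Complex.I := by
    rw [ha_def]; field_simp
  have hbz : z * b = z - Complex.I := by
    rw [hb_def]; field_simp
  have ha : a ≠ 0 := fun h => hzmI (by rw [← haz, h, mul_zero])
  have hb : b ≠ 0 := fun h => hzI (by rw [← hbz, h, mul_zero])
  have key : (z + Complex.I) / (z - Complex.I) = a / b := by
    rw [← haz, ← hbz, mul_div_mul_left _ _ hz0]
  have hnsq : 0 < Complex.normSq z := Complex.normSq_pos.mpr hz0
  have hima : a.im = z.re / Complex.normSq z := by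
    simp [ha_def, Complex.div_im]
  have himb : b.im = -(z.re / Complex.normSq z) := by
    simp [hb_def, Complex.div_im]
  have hnsqI : 0 < Complex.normSq (z - Complex.I) := Complex.normSq_pos.mpr hzI
  have himab : (a/b).im = 2 * z.re / Complex.normSq (z - Complex.I) := by
    rw [← key]
    rw [Complex.div_im]
    simp [Complex.normSq_apply, Complex.add_im, Complex.add_re, Complex.sub_im, Complex.sub_re]
    ring
  constructor
  · rintro ⟨hre, him0, him1⟩
    have hyc : (z.im : ℂ) ≠ 0 := Complex.ofReal_ne_zero.mpr (ne_of_gt him0)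
    have hz' : z = (z.im : ℂ) * Complex.I := by
      apply Complex.ext <;> simp [hre]
    have hIz : Complex.I / z = ((z.im⁻¹ : ℝ) : ℂ) := by
      rw [hz']
      rw [div_eq_iff (by simp [hyc, Complex.I_ne_zero])]
      push_cast
      field_simp
      simp [hyc]
    have hainv : 1 < z.im⁻¹ := (one_lt_inv₀ him0).2 him1
    have hA : a = ((1 + z.im⁻¹ : ℝ) : ℂ) := by rw [ha_def, hIz]; push_cast; ring
    have hB : b = ((1 - z.im⁻¹ : ℝ) : ℂ) := by rw [hb_def, hIz]; push_cast; ring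
    have harga : a.arg = 0 := by
      rw [hA]; exact Complex.arg_ofReal_of_nonneg (by linarith)
    have hargb : b.arg = Real.pi := by
      rw [hB]; exact Complex.arg_ofReal_of_neg (by linarith)
    rw [key, hlp2 ha hb (by rw [harga, hargb]; ring), mul_add]
    congr 1
    have hI2 : (2 * Complex.I) ≠ 0 := by simp [Complex.I_ne_zero]
    field_simp
  · intro hne
    rcases eq_or_ne z.re 0 with hre | hre
    · -- purely imaginary, z.im < 0 or 1 < z.im
      have hy0 : z.im ≠ 0 := by
        intro h; exact hz0 (Complex.ext hre h)
      have hy1 : z.im ≠ 1 := by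
        intro h; exact hzi (by apply Complex.ext <;> simp [hre, h])
      have hyc : (z.im : ℂ) ≠ 0 := Complex.ofReal_ne_zero.mpr hy0
      have hz' : z = (z.im : ℂ) * Complex.I := by
        apply Complex.ext <;> simp [hre]
      have hIz : Complex.I / z = ((z.im⁻¹ : ℝ) : ℂ) := by
        rw [hz']
        rw [div_eq_iff (by simp [hyc, Complex.I_ne_zero])]
        push_cast
        try field_simp
        try ring
        simp [hyc]
      have hB : b = ((1 - z.im⁻¹ : ℝ) : ℂ) := by rw [hb_def, hIz]; push_cast; ring
      have hcase : z.im < 0 ∨ 1 < z.im := by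
        rcases lt_trichotomy z.im 0 with h | h | h
        · exact Or.inl h
        · exact absurd h hy0
        · right
          by_contra hle
          push_neg at hle
          exact hne ⟨hre, h, lt_of_le_of_ne hle hy1⟩
      have hbpos : 0 < 1 - z.im⁻¹ := by
        rcases hcase with h | h
        · have : z.im⁻¹ < 0 := inv_lt_zero.2 h
          linarith
        · have : z.im⁻¹ < 1 := inv_lt_one_of_one_lt₀ h
          linarith
      have hargb : b.arg = 0 := by
        rw [hB]; exact Complex.arg_ofReal_of_nonneg hbpos.le
      rw [key, hlp1 ha hb (by rw [hargb]; simpa using Complex.neg_pi_lt_arg a)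
        (by rw [hargb]; simpa using Complex.arg_le_pi a)]
    · -- z.re ≠ 0
      obtain ⟨k, hk⟩ := hlp3 ha hb
      have hπ := Real.pi_pos
      have hdiff : a.arg - b.arg = (a/b).arg := by
        have hk0 : k = 0 := by
          rcases lt_or_gt_of_ne hre with hx | hx
          · -- z.re < 0 : im a < 0, im b > 0, im (a/b) < 0
            have h1 : a.arg < 0 := Complex.arg_neg_iff.mpr (by rw [hima]; exact div_neg_of_neg_of_pos hx hnsq)
            have h2 : 0 ≤ b.arg := Complex.arg_nonneg_iff.mpr (by
              rw [himb, neg_nonneg]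
              exact (div_neg_of_neg_of_pos hx hnsq).le)
            have h3 : (a/b).arg < 0 := Complex.arg_neg_iff.mpr (by
              rw [himab]
              exact div_neg_of_neg_of_pos (by linarith) hnsqI)
            have hb1 := Complex.neg_pi_lt_arg a
            have hb2 := Complex.arg_le_pi b
            have hb3 := Complex.neg_pi_lt_arg (a/b)
            have hlt : (k : ℝ) < 1 := by nlinarith
            have hgt : (-1 : ℝ) < k := by nlinarith
            have : k < 1 := by exact_mod_cast hlt
            have : (-1 : ℤ) < k := by exact_mod_cast hgt
            omega
          · -- z.re > 0
            have h1 : 0 ≤ a.arg := Complex.arg_nonneg_iff.mpr (by rw [hima]; positivity)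
            have h2 : b.arg < 0 := Complex.arg_neg_iff.mpr (by
              rw [himb, neg_lt_zero]
              positivity)
            have h3 : 0 ≤ (a/b).arg := Complex.arg_nonneg_iff.mpr (by rw [himab]; positivity)
            have hb1 := Complex.arg_le_pi a
            have hb2 := Complex.neg_pi_lt_arg b
            have hb3 := Complex.arg_le_pi (a/b)
            have hlt : (k : ℝ) < 1 := by nlinarith
            have hgt : (-1 : ℝ) < k := by nlinarith
            have : k < 1 := by exact_mod_cast hlt
            have : (-1 : ℤ) < k := by exact_mod_cast hgt
            omega
        rw [hk0] at hk
        push_cast at hk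
        linarith
      rw [key, hlp1 ha hb (by rw [hdiff]; exact Complex.neg_pi_lt_arg _)
        (by rw [hdiff]; exact Complex.arg_le_pi _)]
end
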